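/- Let Δ be a two-dimensional lattice polygon and let P, Q be distinct lattice points of Δ. If for every integer q ≥ 1 one has ((qΔ)^{(1)} − P) ∩ ((qΔ)^{(1)} − Q) ∩ ℤ² ⊆ ((q−1)Δ)^{(1)}, then for every integer q ≥ 1 one has (qΔ − P) ∩ (qΔ − Q) ∩ ℤ² ⊆ (q−1)Δ. -/

import Mathlib

open scoped Pointwise

noncomputable section

/-- The embedding of the lattice `ℤ²` into `ℝ²`. -/
def ι2 (p : ℤ × ℤ) : ℝ × ℝ := ((p.1 : ℝ), (p.2 : ℝ))

/-- A lattice polygon: the convex hull of a finite set of lattice points. -/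
def IsLatticePolygon (Δ : Set (ℝ × ℝ)) : Prop :=
  ∃ S : Finset (ℤ × ℤ), Δ = convexHull ℝ (ι2 '' ↑S)

/-- The translate `A − P` of a set. -/
def transl (A : Set (ℝ × ℝ)) (P : ℝ × ℝ) : Set (ℝ × ℝ) := (fun x => x - P) '' A

/-- `Δ^{(1)}`: the convex hull of the lattice points in the topological interior of `Δ`. -/
def interiorHull (A : Set (ℝ × ℝ)) : Set (ℝ × ℝ) := convexHull ℝ (interior A ∩ Set.range ι2)

lemma iota_add (a b : ℤ × ℤ) : ι2 (a + b) = ι2 a + ι2 b := by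
  simp only [ι2, Prod.ext_iff, Prod.fst_add, Prod.snd_add]
  push_cast
  exact ⟨rfl, rfl⟩

lemma iota_nsmul (k : ℕ) (a : ℤ × ℤ) : ι2 (k • a) = (k : ℝ) • ι2 a := by
  have h1 : (k • a).1 = (k : ℤ) * a.1 := by simp [Prod.smul_fst, mul_comm]
  have h2 : (k • a).2 = (k : ℤ) * a.2 := by simp [Prod.smul_snd, mul_comm]
  simp only [ι2, Prod.ext_iff, h1, h2, Prod.smul_mk, smul_eq_mul]
  push_cast
  exact ⟨rfl, rfl⟩

lemma mem_transl {A : Set (ℝ × ℝ)} {p z : ℝ × ℝ} : z ∈ transl A p ↔ z + p ∈ A := by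
  constructor
  · rintro ⟨a, ha, rfl⟩; simpa using ha
  · intro h; exact ⟨z + p, h, by ring⟩

/-- there is a lattice point in the interior of some dilate -/
lemma exists_interior_lattice {Δ : Set (ℝ × ℝ)} (h2 : (interior Δ).Nonempty) :
    ∃ (w : ℤ × ℤ) (m : ℕ), 1 ≤ m ∧ ι2 w ∈ interior (((m : ℕ) : ℝ) • Δ) := by
  obtain ⟨z, hz⟩ := h2
  obtain ⟨ε, hε, hball⟩ := Metric.isOpen_iff.1 isOpen_interior z hz
  obtain ⟨q1, hq1a, hq1b⟩ := exists_rat_btwn (show z.1 < z.1 + ε by linarith)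
  obtain ⟨q2, hq2a, hq2b⟩ := exists_rat_btwn (show z.2 < z.2 + ε by linarith)
  have hp : ((q1 : ℝ), (q2 : ℝ)) ∈ interior Δ := by
    apply hball
    rw [Metric.mem_ball, Prod.dist_eq]
    simp only [Real.dist_eq]
    rw [max_lt_iff]
    constructor
    · rw [abs_lt]; constructor <;> linarith
    · rw [abs_lt]; constructor <;> linarith
  refine ⟨(q1.num * q2.den, q2.num * q1.den), q1.den * q2.den,
    Nat.one_le_iff_ne_zero.2 (by positivity), ?_⟩
  have hm0 : ((q1.den * q2.den : ℕ) : ℝ) ≠ 0 := by positivity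
  rw [interior_smul₀ hm0]
  have : ι2 (q1.num * q2.den, q2.num * q1.den)
      = ((q1.den * q2.den : ℕ) : ℝ) • ((q1 : ℝ), (q2 : ℝ)) := by
    simp only [ι2, Prod.smul_mk, smul_eq_mul, Prod.mk.injEq]
    rw [Rat.cast_def, Rat.cast_def]
    have d1 : (q1.den : ℝ) ≠ 0 := by positivity
    have d2 : (q2.den : ℝ) ≠ 0 := by positivity
    constructor
    · push_cast; field_simp
    · push_cast; field_simp
  rw [this]
  exact Set.smul_mem_smul_set hp


/-- if `((qΔ)⁽¹⁾ − P) ∩ ((qΔ)⁽¹⁾ − Q) ∩ ℤ² ⊆ ((q−1)Δ)⁽¹⁾` for all `q ≥ 1`,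
then `(qΔ − P) ∩ (qΔ − Q) ∩ ℤ² ⊆ (q−1)Δ` for all `q ≥ 1`. -/
theorem stmt1 (Δ : Set (ℝ × ℝ)) (hΔ : IsLatticePolygon Δ) (h2 : (interior Δ).Nonempty)
    (P Q : ℤ × ℤ) (hP : ι2 P ∈ Δ) (hQ : ι2 Q ∈ Δ) (hPQ : P ≠ Q)
    (hyp : ∀ q : ℕ, 1 ≤ q →
      transl (interiorHull ((q : ℝ) • Δ)) (ι2 P) ∩ transl (interiorHull ((q : ℝ) • Δ)) (ι2 Q) ∩
          Set.range ι2
        ⊆ interiorHull (((q : ℝ) - 1) • Δ)) :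
    ∀ q : ℕ, 1 ≤ q →
      transl ((q : ℝ) • Δ) (ι2 P) ∩ transl ((q : ℝ) • Δ) (ι2 Q) ∩ Set.range ι2
        ⊆ ((q : ℝ) - 1) • Δ := by
  obtain ⟨S, hS⟩ := hΔ
  have hconv : Convex ℝ Δ := hS ▸ convex_convexHull ℝ _
  have hcomp : IsCompact Δ := hS ▸ (S.finite_toSet.image ι2).isCompact_convexHull (𝕜 := ℝ)
  -- closed + interior ⊆ interior of sum dilate
  have lemA : ∀ (a b : ℝ), 0 ≤ a → 0 ≤ b → ∀ u v : ℝ × ℝ, u ∈ a • Δ →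
      v ∈ interior (b • Δ) → u + v ∈ interior ((a + b) • Δ) := by
    intro a b ha hb u v hu hv
    rw [hconv.add_smul ha hb]
    have hopen : IsOpen (a • Δ + interior (b • Δ)) := IsOpen.add_left isOpen_interior
    exact interior_maximal (Set.add_subset_add_left interior_subset) hopen
      (Set.add_mem_add hu hv)
  have lemB : ∀ c : ℝ, interiorHull (c • Δ) ⊆ interior (c • Δ) := by
    intro c
    exact convexHull_min Set.inter_subset_left (hconv.smul c).interior
  have lemC : ∀ (c : ℝ) (z : ℤ × ℤ), ι2 z ∈ interior (c • Δ) → ι2 z ∈ interiorHull (c • Δ) :=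
    fun c z hz => subset_convexHull ℝ _ ⟨hz, z, rfl⟩
  have lemD : ∀ c : ℝ, interiorHull (c • Δ) ⊆ c • Δ := fun c =>
    convexHull_min (fun x hx => interior_subset hx.1) (hconv.smul c)
  obtain ⟨w, m, hm, hw⟩ := exists_interior_lattice h2
  -- hyp application helper
  have happ : ∀ q' : ℕ, 1 ≤ q' → ∀ s : ℤ × ℤ, ι2 (s + P) ∈ interiorHull ((q' : ℝ) • Δ) →
      ι2 (s + Q) ∈ interiorHull ((q' : ℝ) • Δ) →
      ι2 s ∈ interiorHull (((q' - 1 : ℕ) : ℝ) • Δ) := by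
    intro q' hq' s h1 h2'
    have := hyp q' hq' (show ι2 s ∈ _ from
      ⟨⟨mem_transl.2 (by rwa [← iota_add]), mem_transl.2 (by rwa [← iota_add])⟩, s, rfl⟩)
    rwa [Nat.cast_sub hq', Nat.cast_one] 
  intro q hq z hz
  obtain ⟨⟨hz1, hz2⟩, v, rfl⟩ := hz
  have hv1 : ι2 v + ι2 P ∈ (q : ℝ) • Δ := mem_transl.1 hz1
  have hv2 : ι2 v + ι2 Q ∈ (q : ℝ) • Δ := mem_transl.1 hz2
  -- key induction
  have key : ∀ k : ℕ, 1 ≤ k → ι2 (k • v + w) ∈ interiorHull (((k * (q - 1) + m : ℕ) : ℝ) • Δ) := by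
    intro k hk
    induction k, hk using Nat.le_induction with
    | base =>
      have h1 : ι2 (1 • v + w + P) ∈ interiorHull (((q + m : ℕ) : ℝ) • Δ) := by
        apply lemC
        have := lemA (q : ℝ) (m : ℝ) (by positivity) (by positivity) _ _ hv1 hw
        have heq : ι2 (1 • v + w + P) = ι2 v + ι2 P + ι2 w := by
          rw [one_smul, iota_add, iota_add]; ring
        rw [heq]
        convert this using 2
        push_cast; ring
      have h2' : ι2 (1 • v + w + Q) ∈ interiorHull (((q + m : ℕ) : ℝ) • Δ) := by
        apply lemC
        have := lemA (q : ℝ) (m : ℝ) (by positivity) (by positivity) _ _ hv2 hw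
        have heq : ι2 (1 • v + w + Q) = ι2 v + ι2 Q + ι2 w := by
          rw [one_smul, iota_add, iota_add]; ring
        rw [heq]
        convert this using 2
        push_cast; ring
      have := happ (q + m) (by omega) (1 • v + w) h1 h2'
      have hnum : q + m - 1 = 1 * (q - 1) + m := by omega
      rwa [hnum] at this
    | succ k hk ih =>
      set c : ℕ := k * (q - 1) + m with hc
      have hι : ι2 ((k + 1) • v + w) = ι2 (k • v + w) + ι2 v := by
        rw [← iota_add]; congr 1
        rw [add_smul, one_smul]; ring
      have h1 : ι2 ((k + 1) • v + w + P) ∈ interiorHull (((q + c : ℕ) : ℝ) • Δ) := by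
        apply lemC
        have := lemA (q : ℝ) (c : ℝ) (by positivity) (by positivity) _ _ hv1 (lemB _ ih)
        have heq : ι2 ((k + 1) • v + w + P) = ι2 v + ι2 P + ι2 (k • v + w) := by
          rw [iota_add, hι]; ring
        rw [heq]
        convert this using 2
        push_cast; ring
      have h2' : ι2 ((k + 1) • v + w + Q) ∈ interiorHull (((q + c : ℕ) : ℝ) • Δ) := by
        apply lemC
        have := lemA (q : ℝ) (c : ℝ) (by positivity) (by positivity) _ _ hv2 (lemB _ ih)
        have heq : ι2 ((k + 1) • v + w + Q) = ι2 v + ι2 Q + ι2 (k • v + w) := by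
          rw [iota_add, hι]; ring
        rw [heq]
        convert this using 2
        push_cast; ring
      have := happ (q + c) (by omega) ((k + 1) • v + w) h1 h2'
      have hnum : q + c - 1 = (k + 1) * (q - 1) + m := by
        simp only [hc]
        have : 1 ≤ q := hq
        cases q with
        | zero => omega
        | succ n => ring_nf; omega
      rwa [hnum] at this
  -- pass to the limit
  have hR := hcomp.isBounded.exists_norm_le
  obtain ⟨R, hR⟩ := hR
  have hR0 : 0 ≤ R := by
    obtain ⟨z0, hz0⟩ := h2
    exact le_trans (norm_nonneg _) (hR z0 (interior_subset hz0))
  -- closedness of target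
  have htgt : IsClosed (((q : ℝ) - 1) • Δ) := by
    have : ((q : ℝ) - 1) • Δ = (fun x : ℝ × ℝ => ((q : ℝ) - 1) • x) '' Δ := rfl
    rw [this]
    exact (hcomp.image (continuous_const_smul _)).isClosed
  have hclos : ι2 v ∈ closure (((q : ℝ) - 1) • Δ) := by
    rw [Metric.mem_closure_iff]
    intro ε hε
    set B : ℝ := (m : ℝ) * R + ‖ι2 w‖ with hB
    have hB0 : 0 ≤ B := by positivity
    obtain ⟨k, hkgt⟩ := exists_nat_gt (max (B / ε) 1)
    have hk1 : 1 ≤ k := by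
      have : (1 : ℝ) < k := lt_of_le_of_lt (le_max_right _ _) hkgt
      exact_mod_cast this.le
    have hkpos : (0 : ℝ) < k := by positivity
    obtain ⟨d, hd, hde⟩ := lemD _ (key k hk1)
    refine ⟨((q : ℝ) - 1) • d, Set.smul_mem_smul_set hd, ?_⟩
    -- compute the distance
    have hcast : ((k * (q - 1) + m : ℕ) : ℝ) = (k : ℝ) * ((q : ℝ) - 1) + m := by
      rw [Nat.cast_add, Nat.cast_mul, Nat.cast_sub hq]
      push_cast; ring
    have hde' : (k : ℝ) • ι2 v + ι2 w = ((k : ℝ) * ((q : ℝ) - 1) + (m : ℝ)) • d := by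
      rw [← hcast, ← iota_nsmul, ← iota_add]; exact hde.symm
    have hdiff : ι2 v - ((q : ℝ) - 1) • d = (k : ℝ)⁻¹ • ((m : ℝ) • d - ι2 w) := by
      have hk' : (k : ℝ) ≠ 0 := ne_of_gt hkpos
      have : (k : ℝ) • (ι2 v - ((q : ℝ) - 1) • d) = (m : ℝ) • d - ι2 w := by
        rw [smul_sub, smul_smul]
        have : (k : ℝ) • ι2 v = ((k : ℝ) * ((q : ℝ) - 1) + (m : ℝ)) • d - ι2 w := by
          rw [← hde']; ring
        rw [this, add_smul]
        ring_nf
      calc ι2 v - ((q : ℝ) - 1) • d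
          = (k : ℝ)⁻¹ • ((k : ℝ) • (ι2 v - ((q : ℝ) - 1) • d)) := by
            rw [smul_smul, inv_mul_cancel₀ hk', one_smul]
        _ = (k : ℝ)⁻¹ • ((m : ℝ) • d - ι2 w) := by rw [this]
    rw [dist_eq_norm, hdiff, norm_smul]
    have hbound : ‖(m : ℝ) • d - ι2 w‖ ≤ B := by
      calc ‖(m : ℝ) • d - ι2 w‖ ≤ ‖(m : ℝ) • d‖ + ‖ι2 w‖ := norm_sub_le _ _
        _ = (m : ℝ) * ‖d‖ + ‖ι2 w‖ := by
            rw [norm_smul, Real.norm_eq_abs, abs_of_nonneg (by positivity : (0:ℝ) ≤ (m:ℝ))]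
        _ ≤ (m : ℝ) * R + ‖ι2 w‖ := by
            have := hR d hd
            nlinarith [Nat.cast_nonneg (α := ℝ) m]
    have hnk : ‖(k : ℝ)⁻¹‖ = (k : ℝ)⁻¹ := by
      rw [Real.norm_eq_abs, abs_of_pos (by positivity)]
    rw [hnk]
    calc (k : ℝ)⁻¹ * ‖(m : ℝ) • d - ι2 w‖ ≤ (k : ℝ)⁻¹ * B := by
          apply mul_le_mul_of_nonneg_left hbound (by positivity)
      _ < ε := by
          rw [inv_mul_lt_iff₀ hkpos]
          have hBε : B / ε < k := lt_of_le_of_lt (le_max_left _ _) hkgt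
          calc B = ε * (B / ε) := by field_simp
            _ < ε * k := by exact mul_lt_mul_of_pos_left hBε hε
            _ = (k : ℝ) * ε := mul_comm _ _
  rwa [htgt.closure_eq] at hclos
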